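/- (Weak duality.) Let T ≥ 1 be an integer. Let (μ₀, μ, μ̂, ν, a) be feasible for the primal LP, i.e. μ₀ ∈ M₊(X⁰), μ, μ̂, ν ∈ M₊(X), a ≥ 0, ν(ℝ^n) + a = T·vol X, μ + ν = f_#ν + μ₀, and μ + μ̂ = λ_X. Let (u, v, w) be feasible for the dual LP, i.e. u ≥ 0, v, w : ℝ^n → ℝ continuous, v ≥ 0 on X⁰, w ≥ 1 + v on X, w ≥ 0 on X, and u + v(f(x)) ≥ v(x) for all x ∈ X. Then μ(ℝ^n) ≤ ∫_X (w(x) + T·u) dλ_X(x). -/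

import Mathlib

open MeasureTheory
open scoped ENNReal

private lemma integrable_of_null_compl {α : Type*} [MeasurableSpace α]
    [TopologicalSpace α] [T2Space α] [OpensMeasurableSpace α]
    {S : Set α} (hS : IsCompact S) (m : Measure α) [IsFiniteMeasure m]
    (hm : m Sᶜ = 0) {g : α → ℝ} (hg : Continuous g) : Integrable g m := by
  have hrestr : m.restrict S = m := Measure.restrict_eq_self_of_ae_mem
    (by rw [MeasureTheory.ae_iff]; exact hm)
  have : IntegrableOn g S m := hg.continuousOn.integrableOn_compact hS
  rwa [IntegrableOn, hrestr] at this

/-- Weak duality between the primal LP over measures and the dual LP over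
continuous functions. -/
theorem weak_duality (n : ℕ) (hn : 1 ≤ n)
    (f : (Fin n → ℝ) → (Fin n → ℝ))
    (hfpoly : ∀ i, ∃ p : MvPolynomial (Fin n) ℝ, ∀ x, f x i = MvPolynomial.eval x p)
    (X0 X : Set (Fin n → ℝ)) (hX0 : IsCompact X0) (hX : IsCompact X)
    (hreach : (⋃ t : ℕ, f^[t] '' X0) ⊆ X)
    (T : ℕ) (hT : 1 ≤ T)
    -- primal feasible point
    (μ₀ μ μh ν : Measure (Fin n → ℝ))
    [IsFiniteMeasure μ₀] [IsFiniteMeasure μ] [IsFiniteMeasure μh] [IsFiniteMeasure ν]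
    (hμ₀ : μ₀ X0ᶜ = 0) (hμ : μ Xᶜ = 0) (hμh : μh Xᶜ = 0) (hν : ν Xᶜ = 0)
    (a : ℝ≥0∞) (hmass : ν Set.univ + a = (T : ℝ≥0∞) * volume X)
    (hliou : μ + ν = Measure.map f ν + μ₀)
    (hlam : μ + μh = volume.restrict X)
    -- dual feasible point
    (u : ℝ) (v w : (Fin n → ℝ) → ℝ)
    (hu : 0 ≤ u) (hv : Continuous v) (hw : Continuous w)
    (hv0 : ∀ x ∈ X0, 0 ≤ v x)
    (hwv : ∀ x ∈ X, 1 + v x ≤ w x)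
    (hw0 : ∀ x ∈ X, 0 ≤ w x)
    (hdec : ∀ x ∈ X, v x ≤ u + v (f x)) :
    (μ Set.univ).toReal ≤ ∫ x in X, (w x + (T : ℝ) * u) := by
  -- continuity of f
  have hfc : Continuous f := by
    refine continuous_pi fun i => ?_
    obtain ⟨p, hp⟩ := hfpoly i
    simpa [funext hp] using MvPolynomial.continuous_eval (p := p)
  -- a.e. membership facts
  have haeμ : ∀ᵐ x ∂μ, x ∈ X := by rw [MeasureTheory.ae_iff]; exact hμ
  have haeν : ∀ᵐ x ∂ν, x ∈ X := by rw [MeasureTheory.ae_iff]; exact hν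
  have haeμh : ∀ᵐ x ∂μh, x ∈ X := by rw [MeasureTheory.ae_iff]; exact hμh
  have haeμ₀ : ∀ᵐ x ∂μ₀, x ∈ X0 := by rw [MeasureTheory.ae_iff]; exact hμ₀
  -- integrability facts
  have ivμ : Integrable v μ := integrable_of_null_compl hX μ hμ hv
  have iwμ : Integrable w μ := integrable_of_null_compl hX μ hμ hw
  have ivν : Integrable v ν := integrable_of_null_compl hX ν hν hv
  have ivfν : Integrable (fun x => v (f x)) ν := integrable_of_null_compl hX ν hν (hv.comp hfc)
  have ivμ₀ : Integrable v μ₀ := integrable_of_null_compl hX0 μ₀ hμ₀ hv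
  have iwμh : Integrable w μh := integrable_of_null_compl hX μh hμh hw
  have iwX : IntegrableOn w X := hw.continuousOn.integrableOn_compact hX
  have hXfin : volume X < ⊤ := hX.measure_lt_top
  haveI : IsFiniteMeasure (volume.restrict X) :=
    ⟨by simpa [Measure.restrict_apply_univ] using hXfin⟩
  -- Liouville identity integrated against v
  have hkey : ∫ x, v x ∂μ + ∫ x, v x ∂ν = ∫ x, v (f x) ∂ν + ∫ x, v x ∂μ₀ := by
    have h1 : ∫ x, v x ∂(μ + ν) = ∫ x, v x ∂(Measure.map f ν + μ₀) := by rw [hliou]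
    rw [integral_add_measure ivμ ivν, integral_add_measure ?_ ivμ₀] at h1
    · rw [integral_map hfc.aemeasurable hv.aestronglyMeasurable] at h1
      exact h1
    · rw [integrable_map_measure hv.aestronglyMeasurable hfc.aemeasurable]
      exact ivfν
  -- μ univ ≤ ∫ (w - v) dμ
  have h1 : (μ Set.univ).toReal ≤ ∫ x, w x ∂μ - ∫ x, v x ∂μ := by
    have : ∫ x, (1 : ℝ) ∂μ ≤ ∫ x, (w x - v x) ∂μ := by
      refine integral_mono_ae (integrable_const 1) (iwμ.sub ivμ) ?_
      filter_upwards [haeμ] with x hx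
      linarith [hwv x hx]
    rw [integral_const, integral_sub iwμ ivμ] at this
    simpa [measureReal_def] using this
  -- ∫ v dν - ∫ v∘f dν ≤ u * ν univ
  have h2 : ∫ x, v x ∂ν - ∫ x, v (f x) ∂ν ≤ u * (ν Set.univ).toReal := by
    have : ∫ x, (v x - v (f x)) ∂ν ≤ ∫ x, u ∂ν := by
      refine integral_mono_ae (ivν.sub ivfν) (integrable_const u) ?_
      filter_upwards [haeν] with x hx
      linarith [hdec x hx]
    rw [integral_sub ivν ivfν, integral_const] at this
    simpa [mul_comm, measureReal_def] using this
  -- 0 ≤ ∫ v dμ₀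
  have h3 : 0 ≤ ∫ x, v x ∂μ₀ := by
    refine integral_nonneg_of_ae ?_
    filter_upwards [haeμ₀] with x hx using hv0 x hx
  -- ∫ w dμ ≤ ∫_X w
  have h4 : ∫ x, w x ∂μ ≤ ∫ x in X, w x := by
    have h0 : 0 ≤ ∫ x, w x ∂μh := by
      refine integral_nonneg_of_ae ?_
      filter_upwards [haeμh] with x hx using hw0 x hx
    have : ∫ x, w x ∂μ + ∫ x, w x ∂μh = ∫ x in X, w x := by
      rw [← integral_add_measure iwμ iwμh, hlam]
    linarith
  -- ν univ ≤ T * vol X (in toReal)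
  have h5 : (ν Set.univ).toReal ≤ (T : ℝ) * (volume X).toReal := by
    have hle : ν Set.univ ≤ (T : ℝ≥0∞) * volume X := by
      rw [← hmass]; exact le_self_add
    have := ENNReal.toReal_mono (by
      exact ENNReal.mul_ne_top (by simp) hXfin.ne) hle
    simpa [ENNReal.toReal_mul] using this
  -- RHS computation
  have hrhs : ∫ x in X, (w x + (T : ℝ) * u)
      = (∫ x in X, w x) + (T : ℝ) * u * (volume X).toReal := by
    rw [integral_add iwX (integrable_const _), integral_const]
    simp [Measure.restrict_apply_univ, mul_comm, measureReal_def]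
  rw [hrhs]
  have h6 : u * (ν Set.univ).toReal ≤ (T : ℝ) * u * (volume X).toReal := by
    calc u * (ν Set.univ).toReal ≤ u * ((T : ℝ) * (volume X).toReal) :=
          mul_le_mul_of_nonneg_left h5 hu
      _ = (T : ℝ) * u * (volume X).toReal := by ring
  linarith
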